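/- For all real x with 0 < x < 1, all integers T ≥ 3, and all integers n, k with n ≥ T+1 and 0 ≤ k ≤ n - T - 1, one has e^{-2/T}·(n-k)^{-x}·T^{x} ≤ ∏_{j=T+1}^{n-k} (1 - x/j) ≤ e^{2/T}·(n-k)^{-x}·T^{x}. -/

import Mathlib

open Finset Real

private lemma sum_inv_le_aux (T : ℕ) (hT : 1 ≤ T) : ∀ m, T ≤ m →
    ∑ j ∈ Finset.Icc (T+1) m, (1:ℝ)/j ≤ Real.log m - Real.log T := by
  intro m hm
  induction m, hm using Nat.le_induction with
  | base => simp [Finset.Icc_eq_empty_of_lt]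
  | succ m hm ih =>
    rw [Finset.sum_Icc_succ_top (by omega)]
    have hmpos : (0:ℝ) < m := by
      have : 0 < m := by omega
      exact_mod_cast this
    have h1 : Real.log ((m:ℝ)/(m+1)) ≤ (m:ℝ)/(m+1) - 1 :=
      Real.log_le_sub_one_of_pos (div_pos hmpos (by linarith))
    rw [Real.log_div (ne_of_gt hmpos) (by positivity)] at h1
    have h2 : (m:ℝ)/(m+1) - 1 = -(1/(m+1)) := by field_simp; ring
    push_cast
    have : (1:ℝ)/((m:ℝ)+1) ≤ Real.log ((m:ℝ)+1) - Real.log m := by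
      rw [h2] at h1; linarith
    linarith

private lemma sum_inv_ge_aux (T : ℕ) (hT : 1 ≤ T) : ∀ m, T ≤ m →
    Real.log ((m:ℝ)+1) - Real.log ((T:ℝ)+1) ≤ ∑ j ∈ Finset.Icc (T+1) m, (1:ℝ)/j := by
  intro m hm
  induction m, hm using Nat.le_induction with
  | base => simp [Finset.Icc_eq_empty_of_lt]
  | succ m hm ih =>
    rw [Finset.sum_Icc_succ_top (by omega)]
    have hmpos : (0:ℝ) < m := by
      have : 0 < m := by omega
      exact_mod_cast this
    have h1 : Real.log (((m:ℝ)+2)/((m:ℝ)+1)) ≤ ((m:ℝ)+2)/((m:ℝ)+1) - 1 :=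
      Real.log_le_sub_one_of_pos (by positivity)
    rw [Real.log_div (by positivity : ((m:ℝ)+2) ≠ 0) (by positivity)] at h1
    have h2 : ((m:ℝ)+2)/((m:ℝ)+1) - 1 = 1/((m:ℝ)+1) := by
      field_simp
      norm_num
    push_cast
    have : Real.log ((m:ℝ)+1+1) - Real.log ((m:ℝ)+1) ≤ 1/((m:ℝ)+1) := by
      rw [h2] at h1
      have : (m:ℝ)+1+1 = (m:ℝ)+2 := by ring
      rw [this]; linarith
    linarith

private lemma sum_inv_sq_le_aux (T : ℕ) (hT : 1 ≤ T) : ∀ m, T ≤ m →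
    ∑ j ∈ Finset.Icc (T+1) m, (1:ℝ)/(j:ℝ)^2 ≤ 1/T - 1/m := by
  intro m hm
  induction m, hm using Nat.le_induction with
  | base => simp [Finset.Icc_eq_empty_of_lt]
  | succ m hm ih =>
    rw [Finset.sum_Icc_succ_top (by omega)]
    have hmpos : (0:ℝ) < m := by
      have : 0 < m := by omega
      exact_mod_cast this
    have key : (1:ℝ)/((m:ℝ)+1)^2 ≤ 1/m - 1/(m+1) := by
      rw [div_sub_div _ _ (ne_of_gt hmpos) (by positivity)]
      rw [div_le_div_iff₀ (by positivity) (by positivity)]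
      nlinarith
    push_cast
    linarith

theorem stmt_2 (x : ℝ) (hx0 : 0 < x) (hx1 : x < 1) (T n k : ℕ) (hT : 3 ≤ T)
    (hn : T + 1 ≤ n) (hk : k ≤ n - T - 1) :
    Real.exp (-2 / T) * ((n : ℝ) - k) ^ (-x) * (T : ℝ) ^ x ≤
      ∏ j ∈ Finset.Icc (T + 1) (n - k), (1 - x / (j : ℝ)) ∧
    ∏ j ∈ Finset.Icc (T + 1) (n - k), (1 - x / (j : ℝ)) ≤
      Real.exp (2 / T) * ((n : ℝ) - k) ^ (-x) * (T : ℝ) ^ x := by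
  set m := n - k with hm_def
  have hm1 : T + 1 ≤ m := by omega
  have hkn : k ≤ n := by omega
  have hcast : ((n:ℝ) - k) = (m:ℝ) := by
    rw [hm_def]; push_cast [Nat.cast_sub hkn]; ring
  have hTpos : (0:ℝ) < T := by positivity
  have hmpos : (0:ℝ) < m := by
    have : (0:ℕ) < m := by omega
    exact_mod_cast this
  rw [hcast]
  clear_value m
  clear hk hn hm_def hcast
  -- positivity of factors
  have hpos : ∀ j ∈ Finset.Icc (T+1) m, (0:ℝ) < 1 - x / j := by
    intro j hj
    simp only [Finset.mem_Icc] at hj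
    have hj4 : (4:ℝ) ≤ j := by
      have : 4 ≤ j := by omega
      exact_mod_cast this
    have : x / j < 1 := by
      rw [div_lt_one (by linarith)]; linarith
    linarith
  have hprodpos : 0 < ∏ j ∈ Finset.Icc (T+1) m, (1 - x / (j:ℝ)) :=
    Finset.prod_pos hpos
  set P := ∏ j ∈ Finset.Icc (T+1) m, (1 - x / (j:ℝ)) with hP
  have hlogP : Real.log P = ∑ j ∈ Finset.Icc (T+1) m, Real.log (1 - x / (j:ℝ)) :=
    Real.log_prod (fun j hj => (hpos j hj).ne')
  -- per-term bounds
  have hub_term : ∀ j ∈ Finset.Icc (T+1) m, Real.log (1 - x / (j:ℝ)) ≤ -(x / j) := by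
    intro j hj
    have := Real.log_le_sub_one_of_pos (hpos j hj)
    linarith
  have hlb_term : ∀ j ∈ Finset.Icc (T+1) m,
      -(x / j) - 2 * (x/j)^2 ≤ Real.log (1 - x / (j:ℝ)) := by
    intro j hj
    simp only [Finset.mem_Icc] at hj
    have hj4 : (4:ℝ) ≤ j := by
      have : 4 ≤ j := by omega
      exact_mod_cast this
    set t := x / j with ht
    have ht0 : 0 < t := div_pos hx0 (by linarith)
    have ht2 : t ≤ 1/2 := by
      rw [ht, div_le_iff₀ (by linarith)]; linarith
    have h1 : 1 - (1 - t)⁻¹ ≤ Real.log (1 - t) :=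
      Real.one_sub_inv_le_log_of_pos (by linarith)
    have h1t : (0:ℝ) < 1 - t := by linarith
    have h2 : -t - 2*t^2 ≤ 1 - (1 - t)⁻¹ := by
      have heq : 1 - (1 - t)⁻¹ = -t/(1-t) := by field_simp; ring
      rw [heq, le_div_iff₀ h1t]
      nlinarith
    linarith
  -- sum bounds
  have hT1 : 1 ≤ T := by omega
  have hTm : T ≤ m := by omega
  set S := ∑ j ∈ Finset.Icc (T+1) m, (1:ℝ)/j with hS
  have hS_ub : S ≤ Real.log m - Real.log T := sum_inv_le_aux T hT1 m hTm
  have hS_lb : Real.log m - Real.log T - 1/T ≤ S := by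
    have h1 := sum_inv_ge_aux T hT1 m hTm
    have h2 : Real.log (m:ℝ) ≤ Real.log ((m:ℝ)+1) :=
      Real.log_le_log (by linarith) (by linarith)
    have h3 : Real.log ((T:ℝ)+1) ≤ Real.log T + 1/T := by
      have := Real.log_le_sub_one_of_pos (show (0:ℝ) < ((T:ℝ)+1)/T by positivity)
      rw [Real.log_div (by positivity) (by positivity)] at this
      have h4 : ((T:ℝ)+1)/T - 1 = 1/T := by field_simp; ring
      linarith [this, h4 ▸ this]
    linarith
  have hQ : ∑ j ∈ Finset.Icc (T+1) m, (1:ℝ)/(j:ℝ)^2 ≤ 1/T := by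
    have h := sum_inv_sq_le_aux T hT1 m hTm
    have h0 : (0:ℝ) < 1/m := by positivity
    linarith
  -- log P upper bound
  have hlog_ub : Real.log P ≤ x * Real.log T - x * Real.log m + 2/T := by
    rw [hlogP]
    have h1 : ∑ j ∈ Finset.Icc (T+1) m, Real.log (1 - x / (j:ℝ))
        ≤ ∑ j ∈ Finset.Icc (T+1) m, -(x / (j:ℝ)) :=
      Finset.sum_le_sum hub_term
    have h2 : ∑ j ∈ Finset.Icc (T+1) m, -(x / (j:ℝ)) = -(x * S) := by
      rw [hS, Finset.mul_sum, ← Finset.sum_neg_distrib]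
      congr 1; ext j; field_simp
    have h3 : -(x * S) ≤ -(x * (Real.log m - Real.log T - 1/T)) := by
      have := mul_le_mul_of_nonneg_left hS_lb (le_of_lt hx0)
      linarith
    have h4 : x * (1/T) ≤ 2/T := by
      rw [mul_one_div, div_le_div_iff₀ hTpos hTpos]
      nlinarith
    rw [h2] at h1
    linarith [h1, h3, h4]
  -- log P lower bound
  have hlog_lb : x * Real.log T - x * Real.log m - 2/T ≤ Real.log P := by
    rw [hlogP]
    have h1 : ∑ j ∈ Finset.Icc (T+1) m, (-(x / (j:ℝ)) - 2 * (x/(j:ℝ))^2)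
        ≤ ∑ j ∈ Finset.Icc (T+1) m, Real.log (1 - x / (j:ℝ)) :=
      Finset.sum_le_sum hlb_term
    have h2 : ∑ j ∈ Finset.Icc (T+1) m, (-(x / (j:ℝ)) - 2 * (x/(j:ℝ))^2)
        = -(x * S) - 2 * x^2 * ∑ j ∈ Finset.Icc (T+1) m, (1:ℝ)/(j:ℝ)^2 := by
      rw [hS, Finset.mul_sum, Finset.mul_sum, ← Finset.sum_neg_distrib,
        ← Finset.sum_sub_distrib]
      congr 1; ext j
      field_simp
      try ring
    have h3 : x * S ≤ x * (Real.log m - Real.log T) :=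
      mul_le_mul_of_nonneg_left hS_ub (le_of_lt hx0)
    have h4 : 2 * x^2 * ∑ j ∈ Finset.Icc (T+1) m, (1:ℝ)/(j:ℝ)^2 ≤ 2/T := by
      have hx2 : x^2 ≤ 1 := pow_le_one₀ hx0.le hx1.le
      have h22 : (0:ℝ) ≤ 2*x^2 := by positivity
      calc 2 * x^2 * ∑ j ∈ Finset.Icc (T+1) m, (1:ℝ)/(j:ℝ)^2
          ≤ 2 * x^2 * (1/T) := mul_le_mul_of_nonneg_left hQ h22
        _ ≤ 2 * (1/T) := mul_le_mul_of_nonneg_right (by linarith) (by positivity)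
        _ = 2/T := by ring
    rw [h2] at h1
    linarith [h1, h3, h4]
  -- conclude
  have hPexp : P = Real.exp (Real.log P) := (Real.exp_log hprodpos).symm
  have hrw : ∀ c : ℝ, Real.exp (c / T) * ((m:ℝ)) ^ (-x) * (T:ℝ) ^ x
      = Real.exp (c/T - x * Real.log m + x * Real.log T) := by
    intro c
    rw [Real.rpow_def_of_pos hmpos, Real.rpow_def_of_pos hTpos,
      ← Real.exp_add, ← Real.exp_add]
    congr 1
    ring
  constructor
  · rw [hPexp]
    have := hrw (-2)
    rw [show (-2:ℝ)/T - x * Real.log m + x * Real.log T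
        = x * Real.log T - x * Real.log m - 2/T by ring] at this
    rw [this]
    exact Real.exp_le_exp.mpr hlog_lb
  · rw [hPexp]
    have := hrw 2
    rw [show (2:ℝ)/T - x * Real.log m + x * Real.log T
        = x * Real.log T - x * Real.log m + 2/T by ring] at this
    rw [this]
    exact Real.exp_le_exp.mpr hlog_ub
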